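/- Every cubic (3-regular) graph G on n vertices admits an AR-labeling f : E(G) → {1, 2, ..., 3n - 1}, namely one using only odd labels. -/

import Mathlib

open SimpleGraph Finset

/-- The finset of edges of `G` incident to the vertex `v`. -/
def incidentEdges {V : Type*} [Fintype V] [DecidableEq V] (G : SimpleGraph V)
    [DecidableRel G.Adj] (v : V) : Finset (Sym2 V) :=
  G.edgeFinset.filter (fun e => v ∈ e)

/-- `v` is an AR-vertex under the edge labeling `f` if distinct subsets of
the edges incident to `v` have distinct label sums. -/
def IsARVertex {V : Type*} [Fintype V] [DecidableEq V] (G : SimpleGraph V)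
    [DecidableRel G.Adj] (f : Sym2 V → ℕ) (v : V) : Prop :=
  ∀ A ⊆ incidentEdges G v, ∀ B ⊆ incidentEdges G v, A.sum f = B.sum f → A = B

/-- `f` is an AR-labeling of `G`: injective on edges, positive on edges, and
every vertex is an AR-vertex. -/
def IsARLabeling {V : Type*} [Fintype V] [DecidableEq V] (G : SimpleGraph V)
    [DecidableRel G.Adj] (f : Sym2 V → ℕ) : Prop :=
  Set.InjOn f G.edgeSet ∧ (∀ e ∈ G.edgeFinset, 0 < f e) ∧ ∀ v : V, IsARVertex G f v

/-- Key combinatorial lemma: on a 3-element set with injective odd labels,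
distinct subsets have distinct sums. -/
lemma odd_labels_distinct_sums {α : Type*} [DecidableEq α] {s : Finset α} {f : α → ℕ}
    (hs : s.card = 3) (hodd : ∀ e ∈ s, Odd (f e)) (hinj : ∀ x ∈ s, ∀ y ∈ s, f x = f y → x = y)
    {A B : Finset α} (hA : A ⊆ s) (hB : B ⊆ s) (h : A.sum f = B.sum f) : A = B := by
  set A' := A \ B with hA'
  set B' := B \ A with hB'
  have hdisj : Disjoint A' B' := disjoint_sdiff_sdiff
  have hsum : A'.sum f = B'.sum f := by
    have h1 : (A ∩ B).sum f + A'.sum f = A.sum f := Finset.sum_inter_add_sum_sdiff A B f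
    have h2 : (B ∩ A).sum f + B'.sum f = B.sum f := Finset.sum_inter_add_sum_sdiff B A f
    rw [Finset.inter_comm B A] at h2
    omega
  have hA's : A' ⊆ s := (Finset.sdiff_subset).trans hA
  have hB's : B' ⊆ s := (Finset.sdiff_subset).trans hB
  have hpos : ∀ x ∈ s, 0 < f x := by
    intro x hx
    obtain ⟨k, hk⟩ := hodd x hx; omega
  -- show A' and B' are both empty
  have key : A' = ∅ ∧ B' = ∅ := by
    by_contra hcon
    have hne : A'.Nonempty ∧ B'.Nonempty := by
      constructor
      · rcases A'.eq_empty_or_nonempty with h0 | h0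
        · rcases B'.eq_empty_or_nonempty with h1 | h1
          · exact absurd ⟨h0, h1⟩ hcon
          · exfalso
            obtain ⟨x, hx⟩ := h1
            have : 0 < B'.sum f :=
              Finset.sum_pos' (fun i hi => Nat.zero_le _) ⟨x, hx, hpos x (hB's hx)⟩
            rw [h0, Finset.sum_empty] at hsum; omega
        · exact h0
      · rcases B'.eq_empty_or_nonempty with h0 | h0
        · exfalso
          rcases A'.eq_empty_or_nonempty with h1 | h1
          · exact absurd ⟨h1, h0⟩ hcon
          · obtain ⟨x, hx⟩ := h1
            have : 0 < A'.sum f :=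
              Finset.sum_pos' (fun i hi => Nat.zero_le _) ⟨x, hx, hpos x (hA's hx)⟩
            rw [h0, Finset.sum_empty] at hsum; omega
        · exact h0
    obtain ⟨hAne, hBne⟩ := hne
    -- parity: sum mod 2 = card mod 2
    have parity : ∀ C : Finset α, C ⊆ s → C.sum f % 2 = C.card % 2 := by
      intro C hC
      rw [Finset.sum_nat_mod]
      have : ∀ i ∈ C, f i % 2 = 1 := by
        intro i hi
        obtain ⟨k, hk⟩ := hodd i (hC hi); omega
      rw [Finset.sum_congr rfl this, Finset.sum_const, smul_eq_mul, mul_one]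
    have hcards : A'.card + B'.card ≤ 3 := by
      rw [← Finset.card_union_of_disjoint hdisj, ← hs]
      exact Finset.card_le_card (Finset.union_subset hA's hB's)
    have hpar : A'.card % 2 = B'.card % 2 := by
      rw [← parity A' hA's, ← parity B' hB's, hsum]
    have hA1 : A'.card = 1 := by
      have := Finset.card_pos.mpr hAne
      have := Finset.card_pos.mpr hBne
      omega
    have hB1 : B'.card = 1 := by
      have := Finset.card_pos.mpr hAne
      have := Finset.card_pos.mpr hBne
      omega
    obtain ⟨x, hx⟩ := Finset.card_eq_one.mp hA1
    obtain ⟨y, hy⟩ := Finset.card_eq_one.mp hB1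
    have hxy : f x = f y := by
      rw [hx, hy] at hsum; simpa using hsum
    have : x = y := hinj x (hA's (by simp [hx])) y (hB's (by simp [hy])) hxy
    have : x ∈ A' ∩ B' := by
      rw [Finset.mem_inter]
      refine ⟨by simp [hx], by simp [hy, this]⟩
    rw [Finset.disjoint_iff_inter_eq_empty.mp hdisj] at this
    simp at this
  obtain ⟨h1, h2⟩ := key
  exact Finset.Subset.antisymm (by rwa [← Finset.sdiff_eq_empty_iff_subset])
    (by rwa [← Finset.sdiff_eq_empty_iff_subset])

theorem cubic_graph_has_odd_AR_labeling {V : Type*} [Fintype V] [DecidableEq V]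
    (G : SimpleGraph V) [DecidableRel G.Adj]
    (hcubic : ∀ v : V, G.degree v = 3) :
    ∃ f : Sym2 V → ℕ, IsARLabeling G f ∧
      ∀ e ∈ G.edgeFinset, Odd (f e) ∧ f e ∈ Finset.Icc 1 (3 * Fintype.card V - 1) := by
  classical
  set L := G.edgeFinset.toList with hL
  refine ⟨fun e => if e ∈ G.edgeFinset then 2 * L.idxOf e + 1 else 0, ?_, ?_⟩
  · have hcount : 2 * G.edgeFinset.card = 3 * Fintype.card V := by
      have := G.sum_degrees_eq_twice_card_edges
      rw [Finset.sum_congr rfl (fun v _ => hcubic v)] at this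
      simp only [Finset.sum_const, Finset.card_univ, smul_eq_mul] at this
      omega
    have finj : ∀ x ∈ G.edgeFinset, ∀ y ∈ G.edgeFinset,
        (if x ∈ G.edgeFinset then 2 * L.idxOf x + 1 else 0) =
        (if y ∈ G.edgeFinset then 2 * L.idxOf y + 1 else 0) → x = y := by
      intro x hx y hy hf
      rw [if_pos hx, if_pos hy] at hf
      have : L.idxOf x = L.idxOf y := by omega
      exact (List.idxOf_inj (by rwa [hL, Finset.mem_toList])).mp this
    refine ⟨?_, ?_, ?_⟩
    · intro x hx y hy hf
      exact finj x (by rwa [mem_edgeFinset]) y (by rwa [mem_edgeFinset]) hf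
    · intro e he
      simp only [if_pos he]; omega
    · intro v
      intro A hAsub B hBsub hsum
      have hinc : incidentEdges G v = G.incidenceFinset v := by
        ext e
        simp [incidentEdges, SimpleGraph.mem_incidenceFinset, SimpleGraph.incidenceSet,
          SimpleGraph.mem_edgeFinset]
      have hcard : (incidentEdges G v).card = 3 := by
        rw [hinc, SimpleGraph.card_incidenceFinset_eq_degree]; exact hcubic v
      have hincsub : incidentEdges G v ⊆ G.edgeFinset := Finset.filter_subset _ _
      refine odd_labels_distinct_sums hcard ?_ ?_ hAsub hBsub hsum
      · intro e he
        rw [if_pos (hincsub he)]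
        exact ⟨L.idxOf e, by omega⟩
      · intro x hx y hy hf
        exact finj x (hincsub hx) y (hincsub hy) hf
  · intro e he
    simp only [if_pos he]
    have hlt : L.idxOf e < G.edgeFinset.card := by
      rw [hL, ← Finset.length_toList]
      exact List.idxOf_lt_length_iff.mpr (by rwa [Finset.mem_toList])
    have hcount : 2 * G.edgeFinset.card = 3 * Fintype.card V := by
      have := G.sum_degrees_eq_twice_card_edges
      rw [Finset.sum_congr rfl (fun v _ => hcubic v)] at this
      simp only [Finset.sum_const, Finset.card_univ, smul_eq_mul] at this
      omega
    refine ⟨⟨L.idxOf e, by omega⟩, ?_⟩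
    rw [Finset.mem_Icc]
    omega
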